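/- Fix an integer L ≥ 1 and define P_idle : [0, ∞) → ℝ by P_idle(λ) = (q_0 + q_1)^L − q_1^L + (1 − q_0 − q_1) · Σ_{i=2}^L [ (q_0 + q_1)^{i−1} − q_1^{i−1} ] with q_0 = e^{−λ} and q_1 = λe^{−λ}. Then P_idle is monotonically decreasing (antitone) on [0, ∞), with P_idle(0) = 1 (the monotonicity of the idle-channel probability in the offered load asserted in Section IV-A, which makes the load threshold P^τ_idle = P_idle(λ*) well defined for load estimation). -/

import Mathlib

/-- Idle-channel probability of Theorem 4, as a function of the offered load `λ`,
with `q₀ = e^{−λ}` and `q₁ = λe^{−λ}`: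
`P_idle(λ) = (q₀+q₁)^L − q₁^L + (1 − q₀ − q₁)·Σ_{i=2}^L [(q₀+q₁)^{i−1} − q₁^{i−1}]`. -/
noncomputable def Pidle (L : ℕ) (lam : ℝ) : ℝ :=
  (Real.exp (-lam) + lam * Real.exp (-lam)) ^ L - (lam * Real.exp (-lam)) ^ L +
    (1 - Real.exp (-lam) - lam * Real.exp (-lam)) *
      ∑ i ∈ Finset.Icc 2 L,
        ((Real.exp (-lam) + lam * Real.exp (-lam)) ^ (i - 1)
          - (lam * Real.exp (-lam)) ^ (i - 1))

/-- Generic polynomial identity behind Theorem 4's closed form. -/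
lemma pidle_key (a b : ℝ) : ∀ L : ℕ, 1 ≤ L →
    a ^ L - b ^ L + (1 - a) * ∑ i ∈ Finset.Icc 2 L, (a ^ (i - 1) - b ^ (i - 1))
      = (a - b) * ∑ j ∈ Finset.range L, b ^ j := by
  intro L
  induction L with
  | zero => omega
  | succ n ih =>
    intro _
    rcases Nat.eq_zero_or_pos n with hn | hn
    · subst hn; simp
    · have h2 : 2 ≤ n + 1 := by omega
      rw [Finset.sum_Icc_succ_top h2, Finset.sum_range_succ]
      have hih := ih hn
      simp only [Nat.add_sub_cancel]
      linear_combination hih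

/-- The idle probability as a simple sum: `Σ_{j<L} λ^j e^{-(j+1)λ}`. -/
lemma pidle_eq_sum (L : ℕ) (hL : 1 ≤ L) (lam : ℝ) :
    Pidle L lam = ∑ j ∈ Finset.range L, lam ^ j * Real.exp (-((j : ℝ) + 1) * lam) := by
  unfold Pidle
  rw [show (1 - Real.exp (-lam) - lam * Real.exp (-lam))
      = (1 - (Real.exp (-lam) + lam * Real.exp (-lam))) from by ring]
  rw [pidle_key (Real.exp (-lam) + lam * Real.exp (-lam)) (lam * Real.exp (-lam)) L hL]
  have h : Real.exp (-lam) + lam * Real.exp (-lam) - lam * Real.exp (-lam)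
      = Real.exp (-lam) := by ring
  rw [h, Finset.mul_sum]
  refine Finset.sum_congr rfl fun j _ => ?_
  have hexp : Real.exp (-((j : ℝ) + 1) * lam) = Real.exp (-lam) ^ (j + 1) := by
    rw [← Real.exp_nat_mul]
    congr 1
    push_cast
    ring
  rw [hexp, mul_pow, pow_succ]
  ring

lemma hasDerivAt_sum (L : ℕ) (l : ℝ) :
    HasDerivAt (fun x : ℝ => ∑ j ∈ Finset.range L, x ^ j * Real.exp (-((j : ℝ) + 1) * x))
      (∑ j ∈ Finset.range L,
        ((j : ℝ) * l ^ (j - 1) * Real.exp (-((j : ℝ) + 1) * l)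
          - ((j : ℝ) + 1) * l ^ j * Real.exp (-((j : ℝ) + 1) * l))) l := by
  apply HasDerivAt.fun_sum
  intro j _
  have h1 : HasDerivAt (fun x : ℝ => x ^ j) ((j : ℝ) * l ^ (j - 1)) l := hasDerivAt_pow j l
  have h2 : HasDerivAt (fun x : ℝ => Real.exp (-((j : ℝ) + 1) * x))
      (Real.exp (-((j : ℝ) + 1) * l) * (-((j : ℝ) + 1))) l := by
    have := (((hasDerivAt_id l).const_mul (-((j : ℝ) + 1))).exp)
    simpa using this
  have := h1.fun_mul h2
  exact this.congr_deriv (by ring)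

lemma deriv_sum_nonpos (L : ℕ) (l : ℝ) (hl : 0 ≤ l) :
    (∑ j ∈ Finset.range L,
      ((j : ℝ) * l ^ (j - 1) * Real.exp (-((j : ℝ) + 1) * l)
        - ((j : ℝ) + 1) * l ^ j * Real.exp (-((j : ℝ) + 1) * l))) ≤ 0 := by
  rw [Finset.sum_sub_distrib]
  set f : ℕ → ℝ := fun k => (k : ℝ) * l ^ (k - 1) * Real.exp (-(k : ℝ) * l) with hf
  have hB : ∑ j ∈ Finset.range L, ((j : ℝ) + 1) * l ^ j * Real.exp (-((j : ℝ) + 1) * l)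
      = ∑ j ∈ Finset.range L, f (j + 1) := by
    refine Finset.sum_congr rfl fun j _ => ?_
    simp only [hf, Nat.add_sub_cancel]
    push_cast
    ring_nf
  have hre : ∑ j ∈ Finset.range L, f (j + 1) = ∑ j ∈ Finset.range L, f j + f L := by
    have h := Finset.sum_range_succ' f L
    have hf0 : f 0 = 0 := by simp [hf]
    rw [Finset.sum_range_succ] at h
    linarith
  have hA : ∑ j ∈ Finset.range L, (j : ℝ) * l ^ (j - 1) * Real.exp (-((j : ℝ) + 1) * l)
      ≤ ∑ j ∈ Finset.range L, f j := by
    refine Finset.sum_le_sum fun j _ => ?_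
    simp only [hf]
    have hexp : Real.exp (-((j : ℝ) + 1) * l) ≤ Real.exp (-(j : ℝ) * l) := by
      apply Real.exp_le_exp.mpr
      nlinarith
    have hnn : (0 : ℝ) ≤ (j : ℝ) * l ^ (j - 1) := by positivity
    exact mul_le_mul_of_nonneg_left hexp hnn
  have hfL : 0 ≤ f L := by
    simp only [hf]
    positivity
  rw [hB, hre]
  linarith

/-- Section IV-A: the idle-channel probability is monotonically decreasing in the
offered load on `[0, ∞)`, and equals `1` at zero load. -/
theorem stmt13 (L : ℕ) (hL : 1 ≤ L) :
    AntitoneOn (Pidle L) (Set.Ici (0 : ℝ)) ∧ Pidle L 0 = 1 := by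
  constructor
  · have hfun : Pidle L
        = fun lam => ∑ j ∈ Finset.range L, lam ^ j * Real.exp (-((j : ℝ) + 1) * lam) :=
      funext fun lam => pidle_eq_sum L hL lam
    rw [hfun]
    apply antitoneOn_of_deriv_nonpos (convex_Ici 0)
    · exact fun x _ => (hasDerivAt_sum L x).continuousAt.continuousWithinAt
    · intro x _
      exact (hasDerivAt_sum L x).differentiableAt.differentiableWithinAt
    · intro x hx
      rw [(hasDerivAt_sum L x).deriv]
      refine deriv_sum_nonpos L x (le_of_lt ?_)
      simpa [interior_Ici] using hx
  · have hL' : L ≠ 0 := by omega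
    simp [Pidle, zero_pow hL']
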